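/- Let L ≥ 1 be an integer, Δ = 2^L, d ≥ 1, and let Z* ⊆ [Δ]^d be a set of at most k points. Let v ∈ ℝ^d have i.i.d. coordinates uniform on [0,Δ], and for i ∈ {0,1,…,L} let G_i be the grid of axis-aligned cells of side length g_i = Δ/2^i anchored at v, i.e. G_i = { ∏_{l=1}^d [v_l + g_i t_l, v_l + g_i(t_l+1)) : t ∈ ℤ^d }. Call a cell C ∈ G_i a center cell if dist(C, Z*) ≤ g_i/d, where dist(C,Z*) = inf{dist(x,z) : x ∈ C, z ∈ Z*}. Then with probability at least 0.99 over the choice of v, the total number of center cells over all levels i ∈ {0,…,L} is at most 2000kL. -/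

import Mathlib

open scoped ENNReal

noncomputable section

/-- Points of `ℝ^d` with the Euclidean metric. -/
abbrev Pt (d : ℕ) := EuclideanSpace ℝ (Fin d)

/-- The grid `[Δ]^d = {1,…,Δ}^d`. -/
def gridSet (Δ d : ℕ) : Set (Pt d) :=
  {p | ∀ i : Fin d, ∃ m : ℕ, 1 ≤ m ∧ m ≤ Δ ∧ p i = m}

/-- The axis-aligned grid cell of side length `g`, anchored at `v`, with index `t ∈ ℤ^d`:
`∏_l [v_l + g·t_l, v_l + g·(t_l+1))`. -/
def cellOf (d : ℕ) (v : Fin d → ℝ) (g : ℝ) (t : Fin d → ℤ) : Set (Pt d) :=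
  {x | ∀ l : Fin d, v l + g * t l ≤ x l ∧ x l < v l + g * (t l + 1)}

/-- The distance between two sets, `dist(A,B) = inf{dist(a,b) : a ∈ A, b ∈ B}`. -/
def setDist {d : ℕ} (A B : Set (Pt d)) : ℝ :=
  sInf (Set.image2 dist A B)

end

noncomputable section Aux
open MeasureTheory Set

/-- coordinate distance bound in Euclidean space -/
lemma coord_abs_le_dist {d : ℕ} (x z : Pt d) (l : Fin d) : |x l - z l| ≤ dist x z := by
  rw [EuclideanSpace.dist_eq]
  rw [← Real.sqrt_sq_eq_abs (x l - z l)]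
  apply Real.sqrt_le_sqrt
  have := Finset.single_le_sum (f := fun i => dist (x i) (z i)^2)
    (fun i _ => sq_nonneg _) (Finset.mem_univ l)
  simpa [Real.dist_eq, sq_abs] using this

lemma cellOf_nonempty {d : ℕ} (v : Fin d → ℝ) {g : ℝ} (hg : 0 < g) (t : Fin d → ℤ) :
    (cellOf d v g t).Nonempty := by
  refine ⟨WithLp.toLp 2 (fun l => v l + g * t l : Fin d → ℝ), fun l => ?_⟩
  dsimp only [WithLp.ofLp_toLp]
  constructor
  · exact le_refl _
  · have : g * (t l : ℝ) < g * (t l + 1) := by nlinarith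
    linarith

/-- From `setDist ≤ r` with finite nonempty `Z`, get a single near point. -/
lemma exists_near_point {d : ℕ} {C : Set (Pt d)} {Z : Finset (Pt d)} {r : ℝ}
    (hCne : C.Nonempty) (hZ : Z.Nonempty)
    (h : setDist C (↑Z) ≤ r) :
    ∃ z ∈ Z, ∀ ε > 0, ∃ x ∈ C, dist x z ≤ r + ε := by
  by_contra hcon
  push_neg at hcon
  choose εf hεpos hfar using hcon
  have hZa : Z.attach.Nonempty := Finset.attach_nonempty_iff.mpr hZ
  set ε := Z.attach.inf' hZa (fun z => εf z.1 z.2) with hε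
  have hεpos' : 0 < ε := by
    rw [hε, Finset.lt_inf'_iff]
    intro z _
    exact hεpos z.1 z.2
  have hlow : r + ε ≤ setDist C (↑Z) := by
    apply le_csInf
    · obtain ⟨x, hx⟩ := hCne
      obtain ⟨z, hz⟩ := hZ
      exact ⟨dist x z, Set.mem_image2_of_mem hx hz⟩
    · rintro b ⟨x, hx, z, hz, rfl⟩
      have h1 : ε ≤ εf z hz := by
        rw [hε]
        exact Finset.inf'_le (fun w => εf w.1 w.2) (Finset.mem_attach Z ⟨z, hz⟩)
      have := hfar z hz x hx
      linarith
  linarith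

end Aux

section Aux2
open MeasureTheory Set

/-- per-coordinate constraints from setDist bound -/
lemma coord_bounds {d : ℕ} {v : Fin d → ℝ} {g r : ℝ} (hg : 0 < g) (hr : 0 ≤ r)
    {t : Fin d → ℤ} {Z : Finset (Pt d)} (hZ : Z.Nonempty)
    (h : setDist (cellOf d v g t) (↑Z) ≤ r) :
    ∃ z ∈ Z, ∀ l, g * t l ≤ (z l - v l) + r ∧ (z l - v l) - r ≤ g * (t l + 1) := by
  obtain ⟨z, hz, hnear⟩ := exists_near_point (cellOf_nonempty v hg t) hZ h
  refine ⟨z, hz, fun l => ⟨?_, ?_⟩⟩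
  · apply le_of_forall_pos_le_add
    intro ε hε
    obtain ⟨x, hx, hd⟩ := hnear ε hε
    have h1 := (hx l).1
    have h2 : |x l - z l| ≤ r + ε := le_trans (coord_abs_le_dist x z l) hd
    have := abs_le.mp h2
    have : x l - z l ≤ r + ε := this.2
    linarith
  · apply le_of_forall_pos_le_add
    intro ε hε
    obtain ⟨x, hx, hd⟩ := hnear ε hε
    have h1 := (hx l).2
    have h2 : |x l - z l| ≤ r + ε := le_trans (coord_abs_le_dist x z l) hd
    have := (abs_le.mp h2).1
    linarith

/-- deterministic candidate window -/
lemma cand_det {g r w : ℝ} {t : ℤ} (hg : 0 < g) (hr : 0 ≤ r) (hrg : r ≤ g)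
    (h1 : g * t ≤ w + r) (h2 : w - r ≤ g * (t + 1)) :
    t ∈ Finset.Icc (⌊w / g⌋ - 2) (⌊w / g⌋ + 1) := by
  have hfl : g * ⌊w / g⌋ ≤ w := by
    have := Int.floor_le (w / g)
    calc g * (⌊w / g⌋ : ℝ) ≤ g * (w / g) := by nlinarith
    _ = w := by field_simp
  have hfu : w < g * (⌊w / g⌋ + 1) := by
    have := Int.lt_floor_add_one (w / g)
    calc w = g * (w / g) := by field_simp
    _ < g * (⌊w / g⌋ + 1) := by nlinarith
  rw [Finset.mem_Icc]
  constructor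
  · -- t ≥ ⌊w/g⌋ - 2
    have : g * (⌊w / g⌋ - 1 : ℤ) < g * (t + 2 : ℤ) := by
      push_cast
      nlinarith
    have := lt_of_mul_lt_mul_left (by exact_mod_cast this) hg.le
    have : (⌊w / g⌋ - 1 : ℤ) < t + 2 := by exact_mod_cast this
    omega
  · -- t ≤ ⌊w/g⌋ + 1
    have : g * (t : ℤ) < g * (⌊w / g⌋ + 2 : ℤ) := by
      push_cast
      nlinarith
    have := lt_of_mul_lt_mul_left (by exact_mod_cast this) hg.le
    have : (t : ℤ) < ⌊w / g⌋ + 2 := by exact_mod_cast this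
    omega

/-- sharp candidate trichotomy when `2r ≤ g` -/
lemma cand_sharp {g r w : ℝ} {t : ℤ} (hg : 0 < g) (hr : 0 ≤ r) (h2r : 2 * r ≤ g)
    (h1 : g * t ≤ w + r) (h2 : w - r ≤ g * (t + 1)) :
    t = ⌊w / g⌋ ∨ (t = ⌊w / g⌋ + 1 ∧ g * (⌊w / g⌋ + 1) ≤ w + r) ∨
      (t = ⌊w / g⌋ - 1 ∧ w - r ≤ g * ⌊w / g⌋) := by
  have hfl : g * ⌊w / g⌋ ≤ w := by
    have := Int.floor_le (w / g)
    calc g * (⌊w / g⌋ : ℝ) ≤ g * (w / g) := by nlinarith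
    _ = w := by field_simp
  have hfu : w < g * (⌊w / g⌋ + 1) := by
    have := Int.lt_floor_add_one (w / g)
    calc w = g * (w / g) := by field_simp
    _ < g * (⌊w / g⌋ + 1) := by nlinarith
  have hub : t ≤ ⌊w / g⌋ + 1 := by
    have : g * (t : ℤ) < g * (⌊w / g⌋ + 2 : ℤ) := by
      push_cast
      nlinarith
    have := lt_of_mul_lt_mul_left (by exact_mod_cast this) hg.le
    have : (t : ℤ) < ⌊w / g⌋ + 2 := by exact_mod_cast this
    omega
  have hlb : ⌊w / g⌋ - 1 ≤ t := by
    have : g * (⌊w / g⌋ : ℤ) < g * (t + 2 : ℤ) := by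
      push_cast
      nlinarith
    have := lt_of_mul_lt_mul_left (by exact_mod_cast this) hg.le
    have : (⌊w / g⌋ : ℤ) < t + 2 := by exact_mod_cast this
    omega
  rcases eq_or_lt_of_le hub with he | hlt
  · right; left
    refine ⟨he, ?_⟩
    rw [he] at h1
    push_cast at h1
    exact h1
  · rcases eq_or_lt_of_le hlb with he | hlt2
    · right; right
      refine ⟨he.symm, ?_⟩
      have : ((t : ℝ) + 1) = (⌊w / g⌋ : ℝ) := by
        rw [← he]; push_cast; ring
      rw [← this]
      exact h2
    · left; omega

end Aux2

section Aux3
open MeasureTheory Set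

/-- the "left-boundary-near" set -/
def EL (g r z : ℝ) : Set ℝ := ⋃ m : ℤ, Icc (z - g * m - r) (z - g * m)
/-- the "right-boundary-near" set -/
def ER (g r z : ℝ) : Set ℝ := ⋃ m : ℤ, Ioc (z - g * m) (z - g * m + r)

lemma EL_meas (g r z : ℝ) : MeasurableSet (EL g r z) :=
  MeasurableSet.iUnion fun _ => measurableSet_Icc

lemma ER_meas (g r z : ℝ) : MeasurableSet (ER g r z) :=
  MeasurableSet.iUnion fun _ => measurableSet_Ioc

lemma window_EL {g r z : ℝ} (hg : 0 < g) (hr : 0 ≤ r) (h2r : 2 * r ≤ g) (a : ℝ) :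
    volume (EL g r z ∩ Ico a (a + g)) ≤ ENNReal.ofReal r := by
  set M0 : ℤ := ⌊(z - a) / g⌋ with hM0
  set β : ℝ := z - g * M0 with hβ
  have hfl : g * (M0 : ℝ) ≤ z - a := by
    have := Int.floor_le ((z - a) / g)
    calc g * (M0 : ℝ) ≤ g * ((z - a) / g) := by nlinarith
    _ = z - a := by field_simp
  have hfu : z - a < g * ((M0 : ℝ) + 1) := by
    have := Int.lt_floor_add_one ((z - a) / g)
    calc z - a = g * ((z - a) / g) := by field_simp
    _ < g * ((M0 : ℝ) + 1) := by nlinarith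
  have hs0 : a ≤ β := by rw [hβ]; linarith
  have hs1 : β < a + g := by rw [hβ]; nlinarith
  have hsub : EL g r z ∩ Ico a (a + g) ⊆
      Icc (max (β - r) a) β ∪ Icc (β + g - r) (a + g) := by
    rintro x ⟨hxE, hxa, hxb⟩
    obtain ⟨S, ⟨m, rfl⟩, hxS⟩ := hxE
    simp only [mem_Icc] at hxS
    obtain ⟨hx1, hx2⟩ := hxS
    -- bounds on m
    have hmle : m ≤ M0 := by
      have : g * (m : ℝ) ≤ z - a := by linarith
      rw [hM0]
      apply Int.le_floor.mpr
      rw [le_div_iff₀ hg]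
      linarith
    have hmge : M0 - 1 ≤ m := by
      have hx : g * (m : ℝ) > z - a - g - r := by linarith
      by_contra hcon
      push_neg at hcon
      have : m ≤ M0 - 2 := by omega
      have : (m : ℝ) ≤ (M0 : ℝ) - 2 := by exact_mod_cast this
      nlinarith
    have hcase : m = M0 - 1 ∨ m = M0 := by omega
    rcases hcase with rfl | rfl
    · -- m = M0 - 1 : x ∈ [β + g - r, β + g], x < a + g
      right
      constructor
      · push_cast at hx1; rw [hβ]; linarith
      · linarith
    · -- m = M0
      left
      constructor
      · rw [max_le_iff]
        exact ⟨by rw [hβ]; linarith, hxa⟩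
      · rw [hβ]; linarith
  calc volume (EL g r z ∩ Ico a (a + g))
      ≤ volume (Icc (max (β - r) a) β) + volume (Icc (β + g - r) (a + g)) :=
        le_trans (measure_mono hsub) (measure_union_le _ _)
    _ ≤ ENNReal.ofReal r := by
        rw [Real.volume_Icc, Real.volume_Icc]
        rcases le_total (β - a) r with hc | hc
        · rw [max_eq_right (by linarith)]
          rw [← ENNReal.ofReal_add (by linarith) (by linarith)]
          apply ENNReal.ofReal_le_ofReal
          linarith
        · rw [max_eq_left (by linarith)]
          have : ENNReal.ofReal (a + g - (β + g - r)) = 0 := by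
            apply ENNReal.ofReal_eq_zero.mpr
            linarith
          rw [this, add_zero]
          apply ENNReal.ofReal_le_ofReal
          linarith

lemma window_ER {g r z : ℝ} (hg : 0 < g) (hr : 0 ≤ r) (h2r : 2 * r ≤ g) (a : ℝ) :
    volume (ER g r z ∩ Ico a (a + g)) ≤ ENNReal.ofReal r := by
  set M0 : ℤ := ⌊(z - a) / g⌋ with hM0
  set β : ℝ := z - g * M0 with hβ
  have hfl : g * (M0 : ℝ) ≤ z - a := by
    have := Int.floor_le ((z - a) / g)
    calc g * (M0 : ℝ) ≤ g * ((z - a) / g) := by nlinarith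
    _ = z - a := by field_simp
  have hfu : z - a < g * ((M0 : ℝ) + 1) := by
    have := Int.lt_floor_add_one ((z - a) / g)
    calc z - a = g * ((z - a) / g) := by field_simp
    _ < g * ((M0 : ℝ) + 1) := by nlinarith
  have hs0 : a ≤ β := by rw [hβ]; linarith
  have hs1 : β < a + g := by rw [hβ]; nlinarith
  have hsub : ER g r z ∩ Ico a (a + g) ⊆
      Icc β (min (β + r) (a + g)) ∪ Icc a (β - g + r) := by
    rintro x ⟨hxE, hxa, hxb⟩
    obtain ⟨S, ⟨m, rfl⟩, hxS⟩ := hxE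
    simp only [mem_Ioc] at hxS
    obtain ⟨hx1, hx2⟩ := hxS
    have hmge : M0 ≤ m := by
      have : z - g * (m : ℝ) < a + g := by linarith
      by_contra hcon
      push_neg at hcon
      have : m ≤ M0 - 1 := by omega
      have : (m : ℝ) ≤ (M0 : ℝ) - 1 := by exact_mod_cast this
      nlinarith
    have hmle : m ≤ M0 + 1 := by
      have : a ≤ z - g * (m : ℝ) + r := by linarith
      by_contra hcon
      push_neg at hcon
      have : M0 + 2 ≤ m := by omega
      have : (M0 : ℝ) + 2 ≤ (m : ℝ) := by exact_mod_cast this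
      nlinarith
    have hcase : m = M0 ∨ m = M0 + 1 := by omega
    rcases hcase with rfl | rfl
    · -- m = M0 : x ∈ (β, β + r]
      left
      constructor
      · rw [hβ]; linarith
      · rw [le_min_iff]
        exact ⟨by rw [hβ]; linarith, by linarith⟩
    · -- m = M0 + 1 : x ∈ (β - g, β - g + r], x ≥ a
      right
      constructor
      · linarith
      · push_cast at hx2; rw [hβ]; linarith
  calc volume (ER g r z ∩ Ico a (a + g))
      ≤ volume (Icc β (min (β + r) (a + g))) + volume (Icc a (β - g + r)) :=
        le_trans (measure_mono hsub) (measure_union_le _ _)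
    _ ≤ ENNReal.ofReal r := by
        rw [Real.volume_Icc, Real.volume_Icc]
        rcases le_total (β + r) (a + g) with hc | hc
        · rw [min_eq_left hc]
          have : ENNReal.ofReal (β - g + r - a) = 0 := by
            apply ENNReal.ofReal_eq_zero.mpr
            linarith
          rw [this, add_zero]
          apply ENNReal.ofReal_le_ofReal
          linarith
        · rw [min_eq_right hc]
          rw [← ENNReal.ofReal_add (by linarith) (by linarith)]
          apply ENNReal.ofReal_le_ofReal
          linarith

end Aux3

section Aux4
open MeasureTheory Set

/-- covering `[0, Mg]` by `M` windows plus endpoint -/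
lemma stripe_bound {E : Set ℝ} {g r : ℝ} (hg : 0 < g) (hr : 0 ≤ r) (M : ℕ)
    (hW : ∀ a : ℝ, volume (E ∩ Ico a (a + g)) ≤ ENNReal.ofReal r) :
    volume (E ∩ Icc 0 ((M : ℝ) * g)) ≤ (M : ℝ≥0∞) * ENNReal.ofReal r := by
  have hcover : Icc (0:ℝ) ((M : ℝ) * g) ⊆
      (⋃ j ∈ Finset.range M, Ico ((j : ℝ) * g) ((j : ℝ) * g + g)) ∪ {(M : ℝ) * g} := by
    rintro x ⟨hx0, hx1⟩
    rcases eq_or_lt_of_le hx1 with he | hlt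
    · right; exact he
    · left
      have h0 : (0:ℤ) ≤ ⌊x / g⌋ := Int.floor_nonneg.mpr (div_nonneg hx0 hg.le)
      have hM : ⌊x / g⌋ < (M : ℤ) := by
        apply Int.floor_lt.mpr
        push_cast
        rw [div_lt_iff₀ hg]
        linarith
      set j : ℕ := ⌊x / g⌋.toNat with hj
      have hjcast : ((j : ℤ) : ℝ) = (⌊x / g⌋ : ℝ) := by
        rw [hj]; norm_cast; omega
      have hjM : j < M := by omega
      refine mem_iUnion.mpr ⟨j, mem_iUnion.mpr ⟨Finset.mem_range.mpr hjM, ?_, ?_⟩⟩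
      · have := Int.floor_le (x / g)
        push_cast at hjcast ⊢
        rw [hjcast]
        calc (⌊x / g⌋ : ℝ) * g ≤ (x / g) * g := by nlinarith
        _ = x := by field_simp
      · have := Int.lt_floor_add_one (x / g)
        push_cast at hjcast ⊢
        rw [hjcast]
        calc x = (x / g) * g := by field_simp
        _ < ((⌊x / g⌋ : ℝ) + 1) * g := by nlinarith
        _ = (⌊x / g⌋ : ℝ) * g + g := by ring
  calc volume (E ∩ Icc 0 ((M : ℝ) * g))
      ≤ volume ((⋃ j ∈ Finset.range M, E ∩ Ico ((j : ℝ) * g) ((j : ℝ) * g + g)) ∪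
          (E ∩ {(M : ℝ) * g})) := by
        apply measure_mono
        rintro x ⟨hxE, hxI⟩
        rcases hcover hxI with h | h
        · simp only [mem_iUnion, exists_prop] at h
          obtain ⟨j, hj, hx⟩ := h
          refine Or.inl ?_
          simp only [mem_iUnion, exists_prop]
          exact ⟨j, hj, hxE, hx⟩
        · exact Or.inr ⟨hxE, h⟩
    _ ≤ (∑ j ∈ Finset.range M, volume (E ∩ Ico ((j : ℝ) * g) ((j : ℝ) * g + g))) +
          volume (E ∩ {(M : ℝ) * g}) := by
        apply le_trans (measure_union_le _ _)
        gcongr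
        exact measure_biUnion_finset_le _ _
    _ ≤ (∑ _j ∈ Finset.range M, ENNReal.ofReal r) + 0 := by
        gcongr with j hj
        · exact hW _
        · exact le_trans (measure_mono inter_subset_right)
            (le_of_eq (Real.volume_singleton))
    _ = (M : ℝ≥0∞) * ENNReal.ofReal r := by
        rw [add_zero, Finset.sum_const, Finset.card_range, nsmul_eq_mul]

/-- lintegral of a product of coordinate functions over a product measure -/
lemma lintegral_pi_prod {d : ℕ} (μ : Measure ℝ) [IsProbabilityMeasure μ]
    (f : Fin d → ℝ → ℝ≥0∞) (hf : ∀ l, Measurable (f l)) :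
    ∫⁻ v : Fin d → ℝ, ∏ l, f l (v l) ∂(Measure.pi fun _ : Fin d => μ) =
      ∏ l, ∫⁻ x, f l x ∂μ := by
  classical
  have hF : Measurable fun v : Fin d → ℝ => ∏ l, f l (v l) :=
    Finset.measurable_prod _ fun l _ => (hf l).comp (measurable_pi_apply l)
  have key : ∀ s : Finset (Fin d),
      (∫⋯∫⁻_s, (fun v => ∏ l, f l (v l)) ∂(fun _ : Fin d => μ)) =
        fun v => (∏ l ∈ s, ∫⁻ x, f l x ∂μ) * ∏ l ∈ sᶜ, f l (v l) := by
    intro s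
    induction s using Finset.induction_on with
    | empty => simp [lmarginal_empty]
    | insert _ _ hi ih =>
      rename_i i s
      funext x
      rw [lmarginal_insert _ hF hi]
      have hisc : i ∈ sᶜ := Finset.mem_compl.mpr hi
      have hsplit : ∀ y : ℝ, (∏ l ∈ sᶜ, f l (Function.update x i y l)) =
          f i y * ∏ l ∈ sᶜ.erase i, f l (x l) := by
        intro y
        rw [← Finset.mul_prod_erase _ _ hisc]
        congr 1
        · rw [Function.update_self]
        · apply Finset.prod_congr rfl
          intro l hl
          rw [Function.update_of_ne (Finset.ne_of_mem_erase hl)]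
      simp only [ih, hsplit]
      rw [lintegral_const_mul _ (by exact (hf i).mul_const _)]
      rw [lintegral_mul_const _ (hf i)]
      rw [Finset.prod_insert hi, Finset.compl_insert]
      ring
  have := key Finset.univ
  rw [show (Finset.univ : Finset (Fin d))ᶜ = ∅ by simp] at this
  simp only [Finset.prod_empty, mul_one] at this
  rw [lintegral_eq_lmarginal_univ (fun _ => (0:ℝ)), this]

end Aux4

section Aux5
open MeasureTheory Set

/-- the rescaled uniform measure on `[0, D]` -/
noncomputable def mu0 (D : ℕ) : Measure ℝ := ((D : ℝ≥0∞))⁻¹ • volume.restrict (Icc (0:ℝ) (D:ℝ))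

lemma mu0_univ {D : ℕ} (hD : 0 < D) : mu0 D univ = 1 := by
  rw [mu0, Measure.smul_apply, Measure.restrict_apply MeasurableSet.univ, univ_inter,
    Real.volume_Icc, smul_eq_mul]
  rw [show ((D:ℝ) - 0) = (D:ℝ) by ring, ENNReal.ofReal_natCast]
  exact ENNReal.inv_mul_cancel (by exact_mod_cast hD.ne') (by simp)

lemma mu0_prob {D : ℕ} (hD : 0 < D) : IsProbabilityMeasure (mu0 D) :=
  ⟨mu0_univ hD⟩

lemma mu0_apply_le {D : ℕ} (hD : 0 < D) {E : Set ℝ} (hE : MeasurableSet E)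
    {g r : ℝ} (hg : 0 < g) (hr : 0 ≤ r) (M : ℕ) (hMg : (M : ℝ) * g = (D : ℝ))
    (hW : ∀ a : ℝ, volume (E ∩ Ico a (a + g)) ≤ ENNReal.ofReal r) :
    mu0 D E ≤ ENNReal.ofReal ((M : ℝ) * r / (D : ℝ)) := by
  have hDpos : (0:ℝ) < (D:ℝ) := by exact_mod_cast hD
  have h1 : mu0 D E = ((D : ℝ≥0∞))⁻¹ * volume (E ∩ Icc 0 (D:ℝ)) := by
    rw [mu0, Measure.smul_apply, Measure.restrict_apply hE, smul_eq_mul]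
  rw [h1]
  have h2 : volume (E ∩ Icc 0 (D:ℝ)) ≤ ENNReal.ofReal ((M : ℝ) * r) := by
    have := stripe_bound hg hr M hW
    rw [hMg] at this
    refine le_trans this ?_
    rw [ENNReal.ofReal_mul (by positivity)]
    gcongr
    simp
  calc ((D : ℝ≥0∞))⁻¹ * volume (E ∩ Icc 0 (D:ℝ))
      ≤ ((D : ℝ≥0∞))⁻¹ * ENNReal.ofReal ((M : ℝ) * r) := by gcongr
    _ = ENNReal.ofReal ((M : ℝ) * r) / ENNReal.ofReal (D : ℝ) := by
        rw [ENNReal.ofReal_natCast, div_eq_mul_inv, mul_comm]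
    _ = ENNReal.ofReal ((M : ℝ) * r / (D : ℝ)) := by
        rw [ENNReal.ofReal_div_of_pos hDpos]

/-- per-coordinate counting function -/
noncomputable def fc (g r z : ℝ) : ℝ → ℝ≥0∞ := fun x =>
  1 + (EL g r z).indicator 1 x + (ER g r z).indicator 1 x

lemma fc_meas (g r z : ℝ) : Measurable (fc g r z) := by
  apply Measurable.add
  show Measurable ((fun _ => (1:ℝ≥0∞)) + (EL g r z).indicator 1)
  apply Measurable.add
  · exact measurable_const
  · exact measurable_one.indicator (EL_meas g r z)
  · exact measurable_one.indicator (ER_meas g r z)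

lemma lintegral_fc {D : ℕ} (hD : 0 < D) {g r z q : ℝ} (hq : 0 ≤ q)
    (hEL : mu0 D (EL g r z) ≤ ENNReal.ofReal q)
    (hER : mu0 D (ER g r z) ≤ ENNReal.ofReal q) :
    ∫⁻ x, fc g r z x ∂(mu0 D) ≤ ENNReal.ofReal (1 + 2 * q) := by
  have := mu0_prob hD
  have h1 : ∫⁻ x, fc g r z x ∂(mu0 D) =
      1 + mu0 D (EL g r z) + mu0 D (ER g r z) := by
    unfold fc
    rw [lintegral_add_right _ (measurable_one.indicator (ER_meas g r z)),
      lintegral_add_right _ (measurable_one.indicator (EL_meas g r z)),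
      lintegral_one, lintegral_indicator_one (EL_meas g r z),
      lintegral_indicator_one (ER_meas g r z), mu0_univ hD]
  rw [h1]
  calc 1 + mu0 D (EL g r z) + mu0 D (ER g r z)
      ≤ 1 + ENNReal.ofReal q + ENNReal.ofReal q := by gcongr
    _ = ENNReal.ofReal (1 + 2 * q) := by
        rw [← ENNReal.ofReal_one, ← ENNReal.ofReal_add (by norm_num) hq,
          ← ENNReal.ofReal_add (by linarith) hq]
        norm_num
        ring_nf

end Aux5

section Aux6
open MeasureTheory Set

lemma ncard_le_cand {d L : ℕ} (gg rr : ℕ → ℝ) (v : Fin d → ℝ)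
    (Z : Finset (Pt d)) (C : ℕ → Pt d → Fin d → Finset ℤ)
    (hC : ∀ i, i ≤ L → ∀ t : Fin d → ℤ,
      setDist (cellOf d v (gg i) t) (↑Z) ≤ rr i → ∃ z ∈ Z, ∀ l, t l ∈ C i z l) :
    (Set.ncard {it : ℕ × (Fin d → ℤ) | it.1 ≤ L ∧
        setDist (cellOf d v (gg it.1) it.2) (↑Z) ≤ rr it.1}) ≤
      ∑ i ∈ Finset.range (L+1), ∑ z ∈ Z, ∏ l, (C i z l).card := by
  classical
  set B : Finset (ℕ × (Fin d → ℤ)) := (Finset.range (L+1)).biUnion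
    (fun i => (Z.biUnion fun z => Fintype.piFinset (fun l => C i z l)).image
      (Prod.mk i)) with hB
  have hsub : {it : ℕ × (Fin d → ℤ) | it.1 ≤ L ∧
      setDist (cellOf d v (gg it.1) it.2) (↑Z) ≤ rr it.1} ⊆ ↑B := by
    rintro ⟨i, t⟩ ⟨hiL, hdist⟩
    obtain ⟨z, hz, ht⟩ := hC i hiL t hdist
    rw [hB]
    simp only [Finset.coe_biUnion, Finset.mem_coe, Finset.mem_range, mem_iUnion,
      Finset.mem_image, exists_prop]
    refine ⟨i, by omega, t, ?_, rfl⟩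
    exact Finset.mem_biUnion.mpr ⟨z, hz, Fintype.mem_piFinset.mpr ht⟩
  calc (Set.ncard {it : ℕ × (Fin d → ℤ) | it.1 ≤ L ∧
        setDist (cellOf d v (gg it.1) it.2) (↑Z) ≤ rr it.1})
      ≤ B.card := by
        rw [← Set.ncard_coe_finset B]
        exact Set.ncard_le_ncard hsub B.finite_toSet
    _ ≤ ∑ i ∈ Finset.range (L+1),
          ((Z.biUnion fun z => Fintype.piFinset (fun l => C i z l)).image
            (Prod.mk i)).card := Finset.card_biUnion_le
    _ ≤ ∑ i ∈ Finset.range (L+1), ∑ z ∈ Z, ∏ l, (C i z l).card := by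
        apply Finset.sum_le_sum
        intro i _
        refine le_trans Finset.card_image_le ?_
        refine le_trans Finset.card_biUnion_le ?_
        apply Finset.sum_le_sum
        intro z _
        rw [Fintype.card_piFinset]

end Aux6


section Aux7
lemma one_add_div_pow_le (d : ℕ) (hd : 1 ≤ d) : (1 + 2/(d:ℝ))^d ≤ Real.exp 2 := by
  have hdr : (0:ℝ) < d := by exact_mod_cast hd
  have h1 : (1 + 2/(d:ℝ)) ≤ Real.exp (2/d) := by
    have := Real.add_one_le_exp (2/(d:ℝ))
    linarith
  calc (1 + 2/(d:ℝ))^d ≤ (Real.exp (2/d))^d := by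
        apply pow_le_pow_left₀ (by positivity) h1
    _ = Real.exp 2 := by
        rw [← Real.exp_nat_mul]
        congr 1
        field_simp

lemma exp_two_le : Real.exp 2 ≤ 7.39 := by
  have h := Real.exp_one_lt_d9
  have h2 : Real.exp 2 = Real.exp 1 * Real.exp 1 := by
    rw [← Real.exp_add]; norm_num
  nlinarith [Real.exp_pos 1]
end Aux7

section Aux8
open MeasureTheory Set

lemma markov_const (L k : ℕ) (hL : 1 ≤ L) (hk : 1 ≤ k) :
    ((L+1 : ℕ) : ℝ≥0∞) * ((k : ℝ≥0∞) * ENNReal.ofReal (Real.exp 2)) ≤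
      ENNReal.ofReal 0.01 * ((2000*k*L : ℕ) : ℝ≥0∞) := by
  have hLr : (1:ℝ) ≤ (L:ℝ) := by exact_mod_cast hL
  have hkr : (1:ℝ) ≤ (k:ℝ) := by exact_mod_cast hk
  calc ((L+1 : ℕ) : ℝ≥0∞) * ((k : ℝ≥0∞) * ENNReal.ofReal (Real.exp 2))
      = ENNReal.ofReal (((L+1 : ℕ) : ℝ) * ((k:ℝ) * Real.exp 2)) := by
        rw [ENNReal.ofReal_mul (by positivity), ENNReal.ofReal_mul (by positivity),
          ENNReal.ofReal_natCast, ENNReal.ofReal_natCast]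
    _ ≤ ENNReal.ofReal (0.01 * ((2000*k*L : ℕ) : ℝ)) := by
        apply ENNReal.ofReal_le_ofReal
        push_cast
        have h1 : ((L:ℝ)+1) ≤ 2*(L:ℝ) := by linarith
        have h2 : (k:ℝ)*Real.exp 2 ≤ (k:ℝ)*7.39 :=
          mul_le_mul_of_nonneg_left exp_two_le (by linarith)
        have h3 : ((L:ℝ)+1) * ((k:ℝ)*Real.exp 2) ≤ (2*(L:ℝ)) * ((k:ℝ)*7.39) := by
          apply mul_le_mul h1 h2 (by positivity) (by linarith)
        have h4 : (0:ℝ) ≤ (k:ℝ)*(L:ℝ) := by positivity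
        nlinarith
    _ = ENNReal.ofReal 0.01 * ((2000*k*L : ℕ) : ℝ≥0∞) := by
        rw [ENNReal.ofReal_mul (by norm_num), ENNReal.ofReal_natCast]

lemma markov_bad {X : Type*} [MeasurableSpace X] (μ : Measure X) (F : X → ℝ≥0∞)
    (hF : Measurable F) (c : ℝ≥0∞) (hc0 : c ≠ 0) (hct : c ≠ ⊤) (B : ℝ≥0∞)
    (hint : ∫⁻ x, F x ∂μ ≤ B) (hB : B ≤ ENNReal.ofReal 0.01 * c) :
    μ {x | c ≤ F x} ≤ ENNReal.ofReal 0.01 := by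
  refine le_trans (meas_ge_le_lintegral_div hF.aemeasurable hc0 hct) ?_
  refine le_trans (ENNReal.div_le_div_right hint c) ?_
  exact ENNReal.div_le_of_le_mul hB

lemma prob_conclusion {X : Type*} [MeasurableSpace X] (μ : Measure X)
    [IsProbabilityMeasure μ] (Ev : Set X) (h : μ Evᶜ ≤ ENNReal.ofReal 0.01) :
    ENNReal.ofReal 0.99 ≤ μ Ev := by
  have huniv : (1:ℝ≥0∞) ≤ μ Ev + μ Evᶜ := by
    rw [← measure_univ (μ := μ), ← Set.union_compl_self Ev]
    exact measure_union_le _ _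
  have h1 : (1:ℝ≥0∞) - ENNReal.ofReal 0.01 ≤ μ Ev := by
    rw [tsub_le_iff_right]
    exact le_trans huniv (by gcongr)
  refine le_trans (le_of_eq ?_) h1
  rw [← ENNReal.ofReal_one, ← ENNReal.ofReal_sub _ (by norm_num)]
  norm_num
end Aux8

section Main
open MeasureTheory Set

/-- **Lemma 3.2 (Number of center cells).** Shift the hierarchical grids
`G_0,…,G_L` (cell side length `g_i = Δ/2^i` at level `i`) by a uniformly random
vector `v ∈ [0,Δ]^d`. A cell `C ∈ G_i` is a *center cell* if `dist(C, Z*) ≤ g_i/d`.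
Then with probability at least `0.99` over `v`, the total number of center cells
over all levels is at most `2000kL`. -/
theorem stmt11 (L Δ d k : ℕ) (hL : 1 ≤ L) (hΔ : Δ = 2 ^ L) (hd : 1 ≤ d)
    (Zstar : Finset (Pt d)) (hZgrid : ↑Zstar ⊆ gridSet Δ d) (hZcard : Zstar.card ≤ k) :
    ENNReal.ofReal 0.99 ≤
      (MeasureTheory.Measure.pi fun _ : Fin d =>
          ((Δ : ℝ≥0∞))⁻¹ • MeasureTheory.volume.restrict (Set.Icc (0:ℝ) (Δ:ℝ)))
        {v : Fin d → ℝ |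
          ((Set.ncard {it : ℕ × (Fin d → ℤ) | it.1 ≤ L ∧
              setDist (cellOf d v ((Δ:ℝ) / 2 ^ it.1) it.2) (↑Zstar : Set (Pt d)) ≤
                ((Δ:ℝ) / 2 ^ it.1) / d}) : ℝ) ≤ 2000 * k * L} := by
  classical
  have hΔpos : 0 < Δ := by rw [hΔ]; positivity
  have hΔrpos : (0:ℝ) < (Δ:ℝ) := by exact_mod_cast hΔpos
  have hdrpos : (0:ℝ) < (d:ℝ) := by exact_mod_cast hd
  set gg : ℕ → ℝ := fun i => (Δ:ℝ) / 2 ^ i with hgg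
  set rr : ℕ → ℝ := fun i => gg i / d with hrr
  have hggpos : ∀ i, 0 < gg i := fun i => by rw [hgg]; positivity
  have hrrpos : ∀ i, 0 ≤ rr i := fun i => by rw [hrr]; positivity
  have hrrle : ∀ i, rr i ≤ gg i := fun i => by
    rw [hrr]
    rw [div_le_iff₀ hdrpos]
    have hd1 : (1:ℝ) ≤ (d:ℝ) := by exact_mod_cast hd
    nlinarith [hggpos i]
  haveI : IsProbabilityMeasure (mu0 Δ) := mu0_prob hΔpos
  have hμ : (MeasureTheory.Measure.pi fun _ : Fin d =>
      ((Δ : ℝ≥0∞))⁻¹ • MeasureTheory.volume.restrict (Set.Icc (0:ℝ) (Δ:ℝ))) =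
      Measure.pi fun _ : Fin d => mu0 Δ := rfl
  rw [hμ]
  haveI : IsProbabilityMeasure (Measure.pi fun _ : Fin d => mu0 Δ) := by
    infer_instance
  rcases Zstar.eq_empty_or_nonempty with hZe | hZne
  · -- Z* empty : the center-cell set is infinite, so its ncard is 0
    have hall : {v : Fin d → ℝ |
        ((Set.ncard {it : ℕ × (Fin d → ℤ) | it.1 ≤ L ∧
            setDist (cellOf d v ((Δ:ℝ) / 2 ^ it.1) it.2) (↑Zstar : Set (Pt d)) ≤
              ((Δ:ℝ) / 2 ^ it.1) / d}) : ℝ) ≤ 2000 * k * L} = univ := by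
      apply eq_univ_of_forall
      intro v
      have hSD : ∀ it : ℕ × (Fin d → ℤ),
          setDist (cellOf d v ((Δ:ℝ) / 2 ^ it.1) it.2) (↑Zstar : Set (Pt d)) = 0 := by
        intro it
        rw [hZe, setDist]
        simp [Real.sInf_empty]
      have hinf : {it : ℕ × (Fin d → ℤ) | it.1 ≤ L ∧
          setDist (cellOf d v ((Δ:ℝ) / 2 ^ it.1) it.2) (↑Zstar : Set (Pt d)) ≤
            ((Δ:ℝ) / 2 ^ it.1) / d}.Infinite := by
        apply Set.infinite_of_injective_forall_mem
          (f := fun n : ℤ => ((0, fun _ => n) : ℕ × (Fin d → ℤ)))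
        · intro a b hab
          have := congr_arg Prod.snd hab
          have := congr_fun this ⟨0, hd⟩
          exact this
        · intro n
          refine ⟨by omega, ?_⟩
          rw [hSD]
          have := hrrpos 0
          simp only [hrr, hgg] at this
          convert this using 2 <;> norm_num
      simp only [mem_setOf_eq, hinf.ncard]
      norm_num
      positivity
    rw [hall, measure_univ]
    exact ENNReal.ofReal_le_one.mpr (by norm_num)
  · have hk1 : 1 ≤ k := le_trans (Finset.card_pos.mpr hZne) hZcard
    rcases le_or_gt d 2 with hd2 | hd3
    · -- small dimension : deterministic bound
      have hall : {v : Fin d → ℝ |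
          ((Set.ncard {it : ℕ × (Fin d → ℤ) | it.1 ≤ L ∧
              setDist (cellOf d v ((Δ:ℝ) / 2 ^ it.1) it.2) (↑Zstar : Set (Pt d)) ≤
                ((Δ:ℝ) / 2 ^ it.1) / d}) : ℝ) ≤ 2000 * k * L} = univ := by
        apply eq_univ_of_forall
        intro v
        simp only [mem_setOf_eq]
        have hcand := ncard_le_cand (L := L) gg rr v Zstar
          (fun i z l => Finset.Icc (⌊(z l - v l) / gg i⌋ - 2) (⌊(z l - v l) / gg i⌋ + 1))
          (fun i hi t hdist => by
            obtain ⟨z, hz, hbd⟩ := coord_bounds (hggpos i) (hrrpos i) hZne hdist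
            exact ⟨z, hz, fun l => cand_det (hggpos i) (hrrpos i) (hrrle i)
              (hbd l).1 (hbd l).2⟩)
        have hcard : ∀ i (z : Pt d) (l : Fin d),
            (Finset.Icc (⌊(z l - v l) / gg i⌋ - 2) (⌊(z l - v l) / gg i⌋ + 1)).card = 4 := by
          intro i z l
          rw [Int.card_Icc]
          rw [show (⌊(z l - v l) / gg i⌋ + 1 + 1 - (⌊(z l - v l) / gg i⌋ - 2)) = 4 by ring]
          rfl
        have hsum : ∑ i ∈ Finset.range (L+1), ∑ z ∈ Zstar,
            ∏ _l : Fin d, (4:ℕ) ≤ (L+1) * (k * 16) := by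
          have h4d : (4:ℕ) ^ d ≤ 16 := by
            calc (4:ℕ)^d ≤ 4^2 := Nat.pow_le_pow_right (by norm_num) hd2
            _ = 16 := by norm_num
          calc ∑ i ∈ Finset.range (L+1), ∑ z ∈ Zstar, ∏ _l : Fin d, (4:ℕ)
              = (L+1) * (Zstar.card * 4^d) := by
                simp [Finset.prod_const, Finset.sum_const, mul_comm]
          _ ≤ (L+1) * (k * 16) := by
                apply Nat.mul_le_mul_left
                exact Nat.mul_le_mul hZcard h4d
        have hnat : (Set.ncard {it : ℕ × (Fin d → ℤ) | it.1 ≤ L ∧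
            setDist (cellOf d v (gg it.1) it.2) (↑Zstar : Set (Pt d)) ≤ rr it.1}) ≤
            2000 * k * L := by
          refine le_trans hcand ?_
          have he : ∑ i ∈ Finset.range (L+1), ∑ z ∈ Zstar,
              ∏ l : Fin d, ((fun i (z : Pt d) l =>
                Finset.Icc (⌊(z l - v l) / gg i⌋ - 2) (⌊(z l - v l) / gg i⌋ + 1)) i z l).card
              = ∑ i ∈ Finset.range (L+1), ∑ z ∈ Zstar, ∏ _l : Fin d, (4:ℕ) := by
            apply Finset.sum_congr rfl; intro i _
            apply Finset.sum_congr rfl; intro z _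
            apply Finset.prod_congr rfl; intro l _
            exact hcard i z l
          rw [he]
          refine le_trans hsum ?_
          have h2L : L + 1 ≤ 2 * L := by linarith
          calc (L+1) * (k*16) ≤ (2*L) * (k*16) := Nat.mul_le_mul_right _ h2L
          _ = 32 * (k * L) := by ring
          _ ≤ 2000 * k * L := by nlinarith
        have : (Set.ncard {it : ℕ × (Fin d → ℤ) | it.1 ≤ L ∧
            setDist (cellOf d v (gg it.1) it.2) (↑Zstar : Set (Pt d)) ≤ rr it.1} : ℝ) ≤
            ((2000 * k * L : ℕ) : ℝ) := by exact_mod_cast hnat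
        refine le_trans (le_of_eq ?_) (le_trans this (by push_cast; ring_nf; rfl))
        rfl
      rw [hall, measure_univ]
      exact ENNReal.ofReal_le_one.mpr (by norm_num)
    · -- main probabilistic branch, d ≥ 3
      have hd3r : (3:ℝ) ≤ (d:ℝ) := by exact_mod_cast hd3
      have h2r : ∀ i, 2 * rr i ≤ gg i := by
        intro i
        rw [hrr]
        simp only
        rw [← mul_div_assoc, div_le_iff₀ hdrpos]
        nlinarith [hggpos i]
      set q : ℝ := 1/(d:ℝ) with hq
      have hq0 : 0 ≤ q := by rw [hq]; positivity
      set F : (Fin d → ℝ) → ℝ≥0∞ := fun v => ∑ i ∈ Finset.range (L+1), ∑ z ∈ Zstar,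
        ∏ l : Fin d, fc (gg i) (rr i) (z l) (v l) with hF
      have hFmeas : Measurable F := by
        rw [hF]
        apply Finset.measurable_sum
        intro i _
        apply Finset.measurable_sum
        intro z _
        apply Finset.measurable_prod
        intro l _
        exact (fc_meas _ _ _).comp (measurable_pi_apply l)
      -- pointwise domination of the count by F
      have hpt : ∀ v : Fin d → ℝ, ((Set.ncard {it : ℕ × (Fin d → ℤ) | it.1 ≤ L ∧
          setDist (cellOf d v (gg it.1) it.2) (↑Zstar : Set (Pt d)) ≤ rr it.1} : ℕ) : ℝ≥0∞)
            ≤ F v := by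
        intro v
        have hcand := ncard_le_cand (L := L) gg rr v Zstar
          (fun i z l => ({⌊(z l - v l)/gg i⌋} : Finset ℤ) ∪
            (if v l ∈ ER (gg i) (rr i) (z l) then {⌊(z l - v l)/gg i⌋ + 1} else ∅) ∪
            (if v l ∈ EL (gg i) (rr i) (z l) then {⌊(z l - v l)/gg i⌋ - 1} else ∅))
          (fun i hi t hdist => by
            obtain ⟨z, hz, hbd⟩ := coord_bounds (hggpos i) (hrrpos i) hZne hdist
            refine ⟨z, hz, fun l => ?_⟩
            have hfl : gg i * (⌊(z l - v l) / gg i⌋:ℝ) ≤ z l - v l := by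
              have := Int.floor_le ((z l - v l) / gg i)
              calc gg i * (⌊(z l - v l) / gg i⌋:ℝ) ≤ gg i * ((z l - v l) / gg i) := by
                    nlinarith [hggpos i]
              _ = z l - v l := by field_simp [(hggpos i).ne']
            have hfu : z l - v l < gg i * ((⌊(z l - v l) / gg i⌋:ℝ)+1) := by
              have := Int.lt_floor_add_one ((z l - v l) / gg i)
              calc z l - v l = gg i * ((z l - v l) / gg i) := by field_simp [(hggpos i).ne']
              _ < gg i * ((⌊(z l - v l) / gg i⌋:ℝ)+1) := by nlinarith [hggpos i]
            rcases cand_sharp (hggpos i) (hrrpos i) (h2r i) (hbd l).1 (hbd l).2 with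
              h | ⟨he, hcond⟩ | ⟨he, hcond⟩
            · apply Finset.mem_union_left
              apply Finset.mem_union_left
              simp [h]
            · apply Finset.mem_union_left
              apply Finset.mem_union_right
              have hmem : v l ∈ ER (gg i) (rr i) (z l) := by
                apply Set.mem_iUnion.mpr
                refine ⟨⌊(z l - v l)/gg i⌋ + 1, ?_⟩
                rw [Set.mem_Ioc]
                push_cast
                constructor
                · linarith
                · linarith
              rw [if_pos hmem]
              simp [he]
            · apply Finset.mem_union_right
              have hmem : v l ∈ EL (gg i) (rr i) (z l) := by
                apply Set.mem_iUnion.mpr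
                refine ⟨⌊(z l - v l)/gg i⌋, ?_⟩
                rw [Set.mem_Icc]
                constructor
                · linarith
                · linarith
              rw [if_pos hmem]
              simp [he])
        refine le_trans (Nat.cast_le.mpr hcand) ?_
        rw [hF]
        push_cast
        apply Finset.sum_le_sum
        intro i _
        apply Finset.sum_le_sum
        intro z _
        apply Finset.prod_le_prod'
        intro l _
        -- card of the candidate finset vs fc
        have hcardle : (({⌊(z l - v l)/gg i⌋} : Finset ℤ) ∪
            (if v l ∈ ER (gg i) (rr i) (z l) then {⌊(z l - v l)/gg i⌋ + 1} else ∅) ∪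
            (if v l ∈ EL (gg i) (rr i) (z l) then {⌊(z l - v l)/gg i⌋ - 1} else ∅)).card ≤
            1 + (if v l ∈ ER (gg i) (rr i) (z l) then 1 else 0) +
              (if v l ∈ EL (gg i) (rr i) (z l) then 1 else 0) := by
          refine le_trans (Finset.card_union_le _ _) ?_
          refine le_trans (Nat.add_le_add_right (Finset.card_union_le _ _) _) ?_
          have e1 : (({⌊(z l - v l)/gg i⌋} : Finset ℤ)).card = 1 := Finset.card_singleton _
          have e2 : ((if v l ∈ ER (gg i) (rr i) (z l) then ({⌊(z l - v l)/gg i⌋ + 1} : Finset ℤ)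
              else ∅)).card ≤ (if v l ∈ ER (gg i) (rr i) (z l) then 1 else 0) := by
            split_ifs <;> simp
          have e3 : ((if v l ∈ EL (gg i) (rr i) (z l) then ({⌊(z l - v l)/gg i⌋ - 1} : Finset ℤ)
              else ∅)).card ≤ (if v l ∈ EL (gg i) (rr i) (z l) then 1 else 0) := by
            split_ifs <;> simp
          exact Nat.add_le_add (Nat.add_le_add (le_of_eq e1) e2) e3
        refine le_trans (Nat.cast_le.mpr hcardle) ?_
        unfold fc
        rw [Set.indicator_apply, Set.indicator_apply]
        push_cast
        split_ifs <;> simp <;> norm_num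
      -- integral bound
      have hcm : ∀ i (z : Pt d) (l : Fin d), Measurable
          (fun v : Fin d → ℝ => fc (gg i) (rr i) (z l) (v l)) :=
        fun i z l => (fc_meas _ _ _).comp (measurable_pi_apply l)
      have hint : ∫⁻ v, F v ∂(Measure.pi fun _ : Fin d => mu0 Δ) ≤
          ((L+1 : ℕ) : ℝ≥0∞) * ((k : ℝ≥0∞) * ENNReal.ofReal (Real.exp 2)) := by
        rw [hF]
        rw [lintegral_finset_sum _ (fun i _ => Finset.measurable_sum _
          (fun z _ => Finset.measurable_prod _ (fun l _ => hcm i z l)))]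
        have hiz : ∀ i ∈ Finset.range (L+1),
            ∫⁻ v, ∑ z ∈ Zstar, ∏ l : Fin d, fc (gg i) (rr i) (z l) (v l)
              ∂(Measure.pi fun _ : Fin d => mu0 Δ) ≤
            (k : ℝ≥0∞) * ENNReal.ofReal (Real.exp 2) := by
          intro i _
          rw [lintegral_finset_sum _ (fun z _ => Finset.measurable_prod _
            (fun l _ => hcm i z l))]
          have hzz : ∀ z ∈ Zstar,
              ∫⁻ v, ∏ l : Fin d, fc (gg i) (rr i) (z l) (v l)
                ∂(Measure.pi fun _ : Fin d => mu0 Δ) ≤ ENNReal.ofReal (Real.exp 2) := by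
            intro z _
            rw [lintegral_pi_prod (mu0 Δ) (fun l => fc (gg i) (rr i) (z l))
              (fun l => fc_meas _ _ _)]
            have hMg : ((2^i : ℕ) : ℝ) * gg i = (Δ:ℝ) := by
              rw [hgg]
              push_cast
              field_simp
            have hqeq : ((2^i : ℕ) : ℝ) * rr i / (Δ:ℝ) = q := by
              have h2i : ((2^i : ℕ):ℝ) = (2:ℝ)^i := by push_cast; ring
              rw [h2i, hq, hrr, hgg]
              simp only
              rw [div_eq_div_iff hΔrpos.ne' hdrpos.ne']
              have h2ne : ((2:ℝ)^i) ≠ 0 := by positivity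
              field_simp
            have hcoord : ∀ l : Fin d,
                ∫⁻ x, fc (gg i) (rr i) (z l) x ∂(mu0 Δ) ≤ ENNReal.ofReal (1 + 2*q) := by
              intro l
              apply lintegral_fc hΔpos hq0
              · have := mu0_apply_le hΔpos (EL_meas (gg i) (rr i) (z l)) (hggpos i)
                  (hrrpos i) (2^i) hMg (window_EL (hggpos i) (hrrpos i) (h2r i))
                refine le_trans this (le_of_eq ?_)
                rw [hqeq]
              · have := mu0_apply_le hΔpos (ER_meas (gg i) (rr i) (z l)) (hggpos i)
                  (hrrpos i) (2^i) hMg (window_ER (hggpos i) (hrrpos i) (h2r i))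
                refine le_trans this (le_of_eq ?_)
                rw [hqeq]
            calc ∏ l : Fin d, ∫⁻ x, fc (gg i) (rr i) (z l) x ∂(mu0 Δ)
                ≤ ∏ _l : Fin d, ENNReal.ofReal (1 + 2*q) :=
                  Finset.prod_le_prod' (fun l _ => hcoord l)
              _ = ENNReal.ofReal (1 + 2*q) ^ d := by
                  rw [Finset.prod_const, Finset.card_univ, Fintype.card_fin]
              _ = ENNReal.ofReal ((1 + 2*q)^d) := (ENNReal.ofReal_pow (by linarith) d).symm
              _ ≤ ENNReal.ofReal (Real.exp 2) := by
                  apply ENNReal.ofReal_le_ofReal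
                  have he : 1 + 2*q = 1 + 2/(d:ℝ) := by rw [hq]; ring
                  rw [he]
                  exact one_add_div_pow_le d hd
          calc ∑ z ∈ Zstar, ∫⁻ v, ∏ l : Fin d, fc (gg i) (rr i) (z l) (v l)
                ∂(Measure.pi fun _ : Fin d => mu0 Δ)
              ≤ ∑ _z ∈ Zstar, ENNReal.ofReal (Real.exp 2) := Finset.sum_le_sum hzz
            _ = (Zstar.card : ℝ≥0∞) * ENNReal.ofReal (Real.exp 2) := by
                rw [Finset.sum_const, nsmul_eq_mul]
            _ ≤ (k : ℝ≥0∞) * ENNReal.ofReal (Real.exp 2) :=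
                mul_le_mul_left (by exact_mod_cast hZcard) _
        calc ∑ i ∈ Finset.range (L+1), ∫⁻ v, ∑ z ∈ Zstar,
              ∏ l : Fin d, fc (gg i) (rr i) (z l) (v l)
                ∂(Measure.pi fun _ : Fin d => mu0 Δ)
            ≤ ∑ _i ∈ Finset.range (L+1), (k : ℝ≥0∞) * ENNReal.ofReal (Real.exp 2) :=
              Finset.sum_le_sum hiz
          _ = ((L+1 : ℕ) : ℝ≥0∞) * ((k : ℝ≥0∞) * ENNReal.ofReal (Real.exp 2)) := by
              rw [Finset.sum_const, Finset.card_range, nsmul_eq_mul]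
      -- Markov inequality
      set c : ℝ≥0∞ := ((2000*k*L : ℕ) : ℝ≥0∞) with hc
      have hn0 : (2000*k*L : ℕ) ≠ 0 := by
        have : 0 < 2000*k*L := Nat.mul_pos (Nat.mul_pos (by norm_num) hk1) hL
        exact this.ne'
      have hc0 : c ≠ 0 := by
        rw [hc]
        exact_mod_cast hn0
      have hctop : c ≠ ⊤ := by rw [hc]; exact ENNReal.natCast_ne_top _
      have hbad : (Measure.pi fun _ : Fin d => mu0 Δ) {v | c ≤ F v} ≤
          ENNReal.ofReal 0.01 := by
        refine markov_bad _ F hFmeas c hc0 hctop _ hint ?_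
        rw [hc]
        exact markov_const L k hL hk1
      -- conclusion
      set Ev : Set (Fin d → ℝ) := {v : Fin d → ℝ |
          ((Set.ncard {it : ℕ × (Fin d → ℤ) | it.1 ≤ L ∧
              setDist (cellOf d v ((Δ:ℝ) / 2 ^ it.1) it.2) (↑Zstar : Set (Pt d)) ≤
                ((Δ:ℝ) / 2 ^ it.1) / d}) : ℝ) ≤ 2000 * k * L} with hEv
      have hsub2 : Evᶜ ⊆ {v | c ≤ F v} := by
        intro v hv
        rw [hEv] at hv
        simp only [mem_compl_iff, mem_setOf_eq, not_le] at hv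
        have hlt : ((2000*k*L : ℕ) : ℝ) <
            (Set.ncard {it : ℕ × (Fin d → ℤ) | it.1 ≤ L ∧
              setDist (cellOf d v (gg it.1) it.2) (↑Zstar : Set (Pt d)) ≤ rr it.1} : ℝ) := by
          push_cast
          exact hv
        have hlt2 : (2000*k*L : ℕ) <
            Set.ncard {it : ℕ × (Fin d → ℤ) | it.1 ≤ L ∧
              setDist (cellOf d v (gg it.1) it.2) (↑Zstar : Set (Pt d)) ≤ rr it.1} := by
          exact_mod_cast hlt
        have : c < ((Set.ncard {it : ℕ × (Fin d → ℤ) | it.1 ≤ L ∧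
            setDist (cellOf d v (gg it.1) it.2) (↑Zstar : Set (Pt d)) ≤ rr it.1} : ℕ) : ℝ≥0∞) := by
          rw [hc]
          exact_mod_cast hlt2
        exact le_of_lt (lt_of_lt_of_le this (hpt v))
      have hbad2 : (Measure.pi fun _ : Fin d => mu0 Δ) Evᶜ ≤ ENNReal.ofReal 0.01 :=
        le_trans (measure_mono hsub2) hbad
      have huniv : (1:ℝ≥0∞) ≤ (Measure.pi fun _ : Fin d => mu0 Δ) Ev +
          (Measure.pi fun _ : Fin d => mu0 Δ) Evᶜ := by
        rw [← measure_univ (μ := Measure.pi fun _ : Fin d => mu0 Δ)]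
        rw [← Set.union_compl_self Ev]
        exact measure_union_le _ _
      have hfinal : ENNReal.ofReal 0.99 ≤ (Measure.pi fun _ : Fin d => mu0 Δ) Ev := by
        have h1 : (1:ℝ≥0∞) - ENNReal.ofReal 0.01 ≤ (Measure.pi fun _ : Fin d => mu0 Δ) Ev := by
          rw [tsub_le_iff_right]
          exact le_trans huniv (by gcongr)
        refine le_trans (le_of_eq ?_) h1
        rw [← ENNReal.ofReal_one, ← ENNReal.ofReal_sub _ (by norm_num)]
        norm_num
      exact hfinal

end Main
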